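/- Let H be a compact abelian group and let φ: ℝⁿ → H be a measurable map. Suppose there exists an open ball W around 0 in ℝⁿ such that φ(v + w) = φ(v)·φ(w) for all v, w ∈ W. Then there exists a group homomorphism φ̃: ℝⁿ → H agreeing with φ on W. -/

import Mathlib

/-- A measurable map `φ : ℝⁿ → H` into a compact abelian group which is a homomorphism
on an open ball `W` around `0` agrees on `W` with a genuine group homomorphism. -/
theorem lift_local_homomorphism
    {n : ℕ} {H : Type*} [CommGroup H] [TopologicalSpace H] [IsTopologicalGroup H]
    [CompactSpace H] [MeasurableSpace H] [BorelSpace H]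
    (φ : (Fin n → ℝ) → H) (hmeas : Measurable φ)
    (r : ℝ) (hr : 0 < r)
    (hadd : ∀ v w : Fin n → ℝ, v ∈ Metric.ball (0 : Fin n → ℝ) r →
      w ∈ Metric.ball (0 : Fin n → ℝ) r → φ (v + w) = φ v * φ w) :
    ∃ ψ : (Fin n → ℝ) → H, (∀ v w : Fin n → ℝ, ψ (v + w) = ψ v * ψ w) ∧
      ∀ v ∈ Metric.ball (0 : Fin n → ℝ) r, ψ v = φ v := by
  have h0 : φ 0 = 1 := by
    have h := hadd 0 0 (Metric.mem_ball_self hr) (Metric.mem_ball_self hr)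
    simp only [add_zero] at h
    exact left_eq_mul.mp h
  -- iterated local homomorphism
  have hpow : ∀ (k : ℕ) (x : Fin n → ℝ), ‖x‖ * k < r → φ ((k : ℝ) • x) = φ x ^ k := by
    intro k
    induction k with
    | zero => intro x _; simpa using h0
    | succ k ih =>
      intro x hx
      push_cast at hx
      have hnn : (0 : ℝ) ≤ ‖x‖ := norm_nonneg x
      have hknn : (0 : ℝ) ≤ (k : ℝ) := Nat.cast_nonneg k
      have hxr : ‖x‖ < r := by nlinarith
      have hk : ‖x‖ * k < r := by nlinarith
      have hmem : (k : ℝ) • x ∈ Metric.ball (0 : Fin n → ℝ) r := by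
        rw [Metric.mem_ball, dist_zero_right, norm_smul, Real.norm_eq_abs,
          abs_of_nonneg hknn]
        linarith [hk, mul_comm (‖x‖) (k : ℝ)]
      have hxmem : x ∈ Metric.ball (0 : Fin n → ℝ) r := by
        rwa [Metric.mem_ball, dist_zero_right]
      have hsplit : ((k + 1 : ℕ) : ℝ) • x = (k : ℝ) • x + x := by
        push_cast; rw [add_smul, one_smul]
      rw [hsplit, hadd _ _ hmem hxmem, ih x hk, pow_succ]
  -- refinement lemma
  have href : ∀ (m k : ℕ) (v : Fin n → ℝ), 0 < m → 0 < k → ‖v‖ < m * r →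
      φ ((m : ℝ)⁻¹ • v) ^ m = φ (((m * k : ℕ) : ℝ)⁻¹ • v) ^ (m * k) := by
    intro m k v hm hk hv
    have hmR : (0 : ℝ) < m := by exact_mod_cast hm
    have hkR : (0 : ℝ) < k := by exact_mod_cast hk
    set x : Fin n → ℝ := ((m : ℝ) * k)⁻¹ • v with hxdef
    have hxk : (k : ℝ) • x = (m : ℝ)⁻¹ • v := by
      rw [hxdef, smul_smul]
      congr 1
      field_simp
    have hxnorm : ‖x‖ * k < r := by
      rw [hxdef, norm_smul, Real.norm_eq_abs, abs_of_pos (by positivity)]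
      have heq : ((m : ℝ) * ↑k)⁻¹ * ‖v‖ * ↑k = ‖v‖ / m := by
        field_simp
      rw [heq, div_lt_iff₀ hmR]
      linarith [hv]
    have h1 : φ ((m : ℝ)⁻¹ • v) = φ x ^ k := by rw [← hxk]; exact hpow k x hxnorm
    rw [h1, ← pow_mul, mul_comm k m]
    congr 2
    push_cast
    rfl
  -- main well-definedness
  have hwd : ∀ (m k : ℕ) (v : Fin n → ℝ), 0 < m → 0 < k → ‖v‖ < m * r → ‖v‖ < k * r →
      φ ((m : ℝ)⁻¹ • v) ^ m = φ ((k : ℝ)⁻¹ • v) ^ k := by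
    intro m k v hm hk hvm hvk
    rw [href m k v hm hk hvm, href k m v hk hm hvk, mul_comm m k]
  -- the extension
  set N : (Fin n → ℝ) → ℕ := fun v => ⌈‖v‖ / r⌉₊ + 1 with hNdef
  have hN : ∀ v : Fin n → ℝ, ‖v‖ < N v * r := by
    intro v
    have h1 : ‖v‖ / r ≤ ⌈‖v‖ / r⌉₊ := Nat.le_ceil _
    have h2 : (⌈‖v‖ / r⌉₊ : ℝ) < N v := by
      rw [hNdef]; push_cast; linarith
    rw [← div_lt_iff₀ hr]
    exact h1.trans_lt h2
  have hNpos : ∀ v : Fin n → ℝ, 0 < N v := fun v => Nat.succ_pos _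
  have hmono : ∀ a b : ℕ, a ≤ b → (a : ℝ) * r ≤ (b : ℝ) * r := fun a b h =>
    mul_le_mul_of_nonneg_right (by exact_mod_cast h) hr.le
  refine ⟨fun v => φ ((N v : ℝ)⁻¹ • v) ^ N v, ?_, ?_⟩
  · -- homomorphism property
    intro v w
    set m : ℕ := N v + N w + N (v + w) with hmdef
    have hm1 : 0 < m := by positivity
    have hmv : ‖v‖ < m * r := (hN v).trans_le (hmono _ _ (by omega))
    have hmw : ‖w‖ < m * r := (hN w).trans_le (hmono _ _ (by omega))
    have hmvw : ‖v + w‖ < m * r := (hN (v + w)).trans_le (hmono _ _ (by omega))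
    have hveq : φ ((N v : ℝ)⁻¹ • v) ^ N v = φ ((m : ℝ)⁻¹ • v) ^ m :=
      hwd (N v) m v (hNpos v) hm1 (hN v) hmv
    have hweq : φ ((N w : ℝ)⁻¹ • w) ^ N w = φ ((m : ℝ)⁻¹ • w) ^ m :=
      hwd (N w) m w (hNpos w) hm1 (hN w) hmw
    have hvweq : φ ((N (v + w) : ℝ)⁻¹ • (v + w)) ^ N (v + w) =
        φ ((m : ℝ)⁻¹ • (v + w)) ^ m :=
      hwd (N (v + w)) m (v + w) (hNpos (v + w)) hm1 (hN (v + w)) hmvw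
    have hmR : (0 : ℝ) < m := by exact_mod_cast hm1
    have hvball : (m : ℝ)⁻¹ • v ∈ Metric.ball (0 : Fin n → ℝ) r := by
      rw [Metric.mem_ball, dist_zero_right, norm_smul, Real.norm_eq_abs,
        abs_of_pos (inv_pos.mpr hmR), inv_mul_lt_iff₀ hmR]
      exact hmv
    have hwball : (m : ℝ)⁻¹ • w ∈ Metric.ball (0 : Fin n → ℝ) r := by
      rw [Metric.mem_ball, dist_zero_right, norm_smul, Real.norm_eq_abs,
        abs_of_pos (inv_pos.mpr hmR), inv_mul_lt_iff₀ hmR]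
      exact hmw
    have hsum : (m : ℝ)⁻¹ • (v + w) = (m : ℝ)⁻¹ • v + (m : ℝ)⁻¹ • w := smul_add _ _ _
    simp only []
    rw [hvweq, hveq, hweq, hsum, hadd _ _ hvball hwball, mul_pow]
  · -- agreement on the ball
    intro v hv
    have hv1 : ‖v‖ < (1 : ℕ) * r := by
      rw [Metric.mem_ball, dist_zero_right] at hv; simpa using hv
    have := hwd (N v) 1 v (hNpos v) one_pos (hN v) hv1
    simp only [Nat.cast_one, inv_one, one_smul, pow_one] at this
    exact this
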